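/- Let a₁, a₂, b₁, b₂, c₁, c₂, m₁, m₂ be positive reals, m₃ ≥ 0, α > 0 and β a nonzero real. Define g(u,z) := a₁ − α²/2 − b₁·e^u − c₁·e^z·e^{(β/α)u}/(m₁ + m₂·e^u + m₃·e^z·e^{(β/α)u}) and h(u,z) := −(a₂ + β²/2 + (β/α)(a₁ − α²/2)) − b₂·e^z·e^{(β/α)u} + (β/α)·b₁·e^u + (c₂·e^u + (β/α)·c₁·e^{z + (β/α)u})/(m₁ + m₂·e^u + m₃·e^{z + (β/α)u}). Then for any u₀, u₁, z₀ ∈ ℝ and any ε > 0 there exist a constant ρ₂ ∈ ℝ, a time T > 0, and differentiable functions u, z : [0,T] → ℝ with u(0) = u₀, z(0) = z₀, satisfying u′(t) = α·ρ₂ + g(u(t), z(t)) and z′(t) = h(u(t), z(t)) for all t ∈ [0,T], such that u(T) = u₁ and |z(T) − z₀| < ε. -/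

import Mathlib

open Set Metric
open scoped NNReal Topology

/-- The hypotheses of the Picard–Lindelöf theorem, in the form used here. -/
structure OldPL {E : Type*} [NormedAddCommGroup E] (v : ℝ → E → E) (tMin t₀ tMax : ℝ) (x₀ : E)
    (L : ℝ≥0) (R C : ℝ) : Prop where
  ht₀ : t₀ ∈ Icc tMin tMax
  hR : 0 ≤ R
  lipschitz : ∀ t ∈ Icc tMin tMax, LipschitzOnWith L (v t) (closedBall x₀ R)
  cont : ∀ x ∈ closedBall x₀ R, ContinuousOn (fun t : ℝ => v t x) (Icc tMin tMax)
  norm_le : ∀ t ∈ Icc tMin tMax, ∀ x ∈ closedBall x₀ R, ‖v t x‖ ≤ C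
  C_mul_le_R : C * max (tMax - t₀) (t₀ - tMin) ≤ R

/-- Picard–Lindelöf with the extra conclusion that the solution stays in the closed ball. -/
theorem pl_ball {E : Type*} [NormedAddCommGroup E] [NormedSpace ℝ E] [CompleteSpace E]
    {v : ℝ → E → E} {tMin t₀ tMax : ℝ} (x₀ : E) {C R : ℝ} {L : ℝ≥0}
    (hpl : OldPL v tMin t₀ tMax x₀ L R C) :
    ∃ f : ℝ → E, f t₀ = x₀ ∧ (∀ t ∈ Icc tMin tMax, f t ∈ closedBall x₀ R) ∧
      ∀ t ∈ Icc tMin tMax, HasDerivWithinAt f (v t (f t)) (Icc tMin tMax) t := by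
  lift C to NNReal using (norm_nonneg _).trans
    (hpl.norm_le t₀ hpl.ht₀ x₀ (mem_closedBall_self hpl.hR))
  lift R to NNReal using hpl.hR
  have hf : IsPicardLindelof v (⟨t₀, hpl.ht₀⟩ : Icc tMin tMax) x₀ R 0 C L :=
    { lipschitzOnWith := hpl.lipschitz
      continuousOn := hpl.cont
      norm_le := hpl.norm_le
      mul_max_le := by simpa using hpl.C_mul_le_R }
  have hx : x₀ ∈ closedBall x₀ ((0 : ℝ≥0) : ℝ) := by simp
  obtain ⟨α, hα⟩ := ODE.FunSpace.exists_isFixedPt_next hf hx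
  refine ⟨α.compProj, ?_, fun t ht => α.compProj_mem_closedBall hf.mul_max_le, fun t ht => ?_⟩
  · rw [ODE.FunSpace.compProj_val (t := (⟨t₀, hpl.ht₀⟩ : Icc tMin tMax)), ← hα,
      ODE.FunSpace.next_apply₀]
  · apply ODE.hasDerivWithinAt_picard_Icc hpl.ht₀ hf.continuousOn_uncurry
      α.continuous_compProj.continuousOn (fun _ ht' ↦ α.compProj_mem_closedBall hf.mul_max_le)
      x₀ ht |>.congr_of_mem _ ht
    intro t' ht'
    nth_rw 1 [← hα]
    rw [ODE.FunSpace.compProj_of_mem ht', ODE.FunSpace.next_apply]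

set_option maxHeartbeats 1000000 in
/-- Claim 1 of Section 3: for the control system in coordinates `(u, z)`,
using a constant control `ρ₂` one can steer the `u`-component from `u₀` to any `u₁`
in finite time while moving the `z`-component by less than `ε`. -/
theorem stmt6 (a₁ a₂ b₁ b₂ c₁ c₂ m₁ m₂ m₃ α β : ℝ)
    (ha₁ : 0 < a₁) (ha₂ : 0 < a₂) (hb₁ : 0 < b₁) (hb₂ : 0 < b₂)
    (hc₁ : 0 < c₁) (hc₂ : 0 < c₂) (hm₁ : 0 < m₁) (hm₂ : 0 < m₂) (hm₃ : 0 ≤ m₃)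
    (hα : 0 < α) (hβ : β ≠ 0) :
    let g : ℝ → ℝ → ℝ := fun u z =>
      a₁ - α ^ 2 / 2 - b₁ * Real.exp u
        - c₁ * Real.exp z * Real.exp ((β / α) * u)
            / (m₁ + m₂ * Real.exp u + m₃ * Real.exp z * Real.exp ((β / α) * u))
    let h : ℝ → ℝ → ℝ := fun u z =>
      -(a₂ + β ^ 2 / 2 + (β / α) * (a₁ - α ^ 2 / 2))
        - b₂ * Real.exp z * Real.exp ((β / α) * u)
        + (β / α) * b₁ * Real.exp u
        + (c₂ * Real.exp u + (β / α) * c₁ * Real.exp (z + (β / α) * u))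
            / (m₁ + m₂ * Real.exp u + m₃ * Real.exp (z + (β / α) * u))
    ∀ u₀ u₁ z₀ : ℝ, ∀ ε : ℝ, 0 < ε →
      ∃ ρ₂ : ℝ, ∃ T : ℝ, 0 < T ∧ ∃ u z : ℝ → ℝ,
        u 0 = u₀ ∧ z 0 = z₀ ∧
        (∀ t ∈ Set.Icc (0 : ℝ) T, HasDerivAt u (α * ρ₂ + g (u t) (z t)) t) ∧
        (∀ t ∈ Set.Icc (0 : ℝ) T, HasDerivAt z (h (u t) (z t)) t) ∧
        u T = u₁ ∧ |z T - z₀| < ε := by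
  intro g h u₀ u₁ z₀ ε hε
  classical
  set x₀ : ℝ × ℝ := (u₀, z₀) with hx₀def
  set G : ℝ × ℝ → ℝ × ℝ := fun p => (g p.1 p.2, h p.1 p.2) with hGdef
  have hexpfst : ContDiff ℝ 1 (fun p : ℝ × ℝ => Real.exp p.1) :=
    Real.contDiff_exp.comp contDiff_fst
  have hexpsnd : ContDiff ℝ 1 (fun p : ℝ × ℝ => Real.exp p.2) :=
    Real.contDiff_exp.comp contDiff_snd
  have hexpk : ContDiff ℝ 1 (fun p : ℝ × ℝ => Real.exp (β / α * p.1)) :=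
    Real.contDiff_exp.comp (contDiff_const.mul contDiff_fst)
  have hexpzk : ContDiff ℝ 1 (fun p : ℝ × ℝ => Real.exp (p.2 + β / α * p.1)) :=
    Real.contDiff_exp.comp (contDiff_snd.add (contDiff_const.mul contDiff_fst))
  have hden1 : ∀ p : ℝ × ℝ,
      m₁ + m₂ * Real.exp p.1 + m₃ * Real.exp p.2 * Real.exp (β / α * p.1) ≠ 0 := by
    intro p
    have e1 := Real.exp_pos p.1
    have e2 := Real.exp_pos p.2
    have e3 := Real.exp_pos (β / α * p.1)
    have : 0 ≤ m₃ * Real.exp p.2 * Real.exp (β / α * p.1) := by positivity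
    nlinarith [mul_pos hm₂ e1]
  have hden2 : ∀ p : ℝ × ℝ,
      m₁ + m₂ * Real.exp p.1 + m₃ * Real.exp (p.2 + β / α * p.1) ≠ 0 := by
    intro p
    have e1 := Real.exp_pos p.1
    have e2 := Real.exp_pos (p.2 + β / α * p.1)
    have : 0 ≤ m₃ * Real.exp (p.2 + β / α * p.1) := by positivity
    nlinarith [mul_pos hm₂ e1]
  have hgc : ContDiff ℝ 1 (fun p : ℝ × ℝ => g p.1 p.2) := by
    show ContDiff ℝ 1 (fun p : ℝ × ℝ =>
      a₁ - α ^ 2 / 2 - b₁ * Real.exp p.1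
        - c₁ * Real.exp p.2 * Real.exp (β / α * p.1)
            / (m₁ + m₂ * Real.exp p.1 + m₃ * Real.exp p.2 * Real.exp (β / α * p.1)))
    exact (contDiff_const.sub (contDiff_const.mul hexpfst)).sub
      (((contDiff_const.mul hexpsnd).mul hexpk).div
        ((contDiff_const.add (contDiff_const.mul hexpfst)).add
          ((contDiff_const.mul hexpsnd).mul hexpk)) hden1)
  have hhc : ContDiff ℝ 1 (fun p : ℝ × ℝ => h p.1 p.2) := by
    show ContDiff ℝ 1 (fun p : ℝ × ℝ =>
      -(a₂ + β ^ 2 / 2 + (β / α) * (a₁ - α ^ 2 / 2))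
        - b₂ * Real.exp p.2 * Real.exp (β / α * p.1)
        + (β / α) * b₁ * Real.exp p.1
        + (c₂ * Real.exp p.1 + (β / α) * c₁ * Real.exp (p.2 + β / α * p.1))
            / (m₁ + m₂ * Real.exp p.1 + m₃ * Real.exp (p.2 + β / α * p.1)))
    exact (((contDiff_const.sub ((contDiff_const.mul hexpsnd).mul hexpk)).add
      (contDiff_const.mul hexpfst)).add
      (((contDiff_const.mul hexpfst).add (contDiff_const.mul hexpzk)).div
        ((contDiff_const.add (contDiff_const.mul hexpfst)).add
          (contDiff_const.mul hexpzk)) hden2))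
  have hGsm : ContDiff ℝ 1 G := hgc.prodMk hhc
  set d : ℝ := |u₁ - u₀| with hddef
  have hd0 : 0 ≤ d := abs_nonneg _
  set R : ℝ := 2 * d + 2 with hRdef
  have hR0 : 0 ≤ R := by positivity
  set B : Set (ℝ × ℝ) := closedBall x₀ R with hBdef
  have hBconv : Convex ℝ B := convex_closedBall _ _
  have hBcpt : IsCompact B := isCompact_closedBall _ _
  -- bound on G
  obtain ⟨M₀, hM₀⟩ := hBcpt.exists_bound_of_continuousOn hGsm.continuous.continuousOn
  set M : ℝ := max M₀ 1 with hMdef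
  have hM1 : (1 : ℝ) ≤ M := le_max_right _ _
  have hM0 : 0 < M := lt_of_lt_of_le one_pos hM1
  have hM : ∀ p ∈ B, ‖G p‖ ≤ M := fun p hp => (hM₀ p hp).trans (le_max_left _ _)
  -- Lipschitz constant for G on B
  obtain ⟨C₁, hC₁⟩ :=
    hBcpt.exists_bound_of_continuousOn (hGsm.continuous_fderiv one_ne_zero).continuousOn
  set K : ℝ≥0 := max C₁.toNNReal 1 with hKdef
  have hK1 : (1 : ℝ) ≤ (K : ℝ) := by exact_mod_cast (le_max_right C₁.toNNReal 1)
  have hK0 : (0 : ℝ) < (K : ℝ) := lt_of_lt_of_le one_pos hK1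
  have hKlip : LipschitzOnWith K G B := by
    refine Convex.lipschitzOnWith_of_nnnorm_fderiv_le
      (fun p _ => hGsm.differentiable one_ne_zero p) (fun p hp => ?_) hBconv
    rw [← norm_toNNReal]
    exact le_trans (Real.toNNReal_mono (hC₁ p hp)) (le_max_left _ _)
  -- the time horizon
  set T : ℝ := min 1 ε / (2 * M) with hTdef
  have hT0 : 0 < T := div_pos (lt_min one_pos hε) (by positivity)
  have hMT : M * T = min 1 ε / 2 := by
    rw [hTdef]; field_simp
  have hMT1 : M * T ≤ 1 / 2 := by
    rw [hMT]; have := min_le_left (1:ℝ) ε; linarith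
  have hMTε : M * T ≤ ε / 2 := by
    rw [hMT]; have := min_le_right (1:ℝ) ε; linarith
  -- the control amplitude
  set P : ℝ := (d + 1 / 2) / (α * T) with hPdef
  have hP0 : 0 < P := by
    apply div_pos (by linarith) (by positivity)
  have hαPT : α * P * T = d + 1 / 2 := by
    rw [hPdef]; field_simp
  -- the controlled vector field
  set F : ℝ → ℝ × ℝ → ℝ × ℝ := fun ρ p => ((α * ρ, 0) : ℝ × ℝ) + G p with hFdef
  have hFlip : ∀ ρ, LipschitzOnWith K (F ρ) B := by
    intro ρ p hp q hq
    simpa [F, edist_add_left] using hKlip hp hq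
  have hFnorm : ∀ ρ, |ρ| ≤ P → ∀ p ∈ B, ‖F ρ p‖ ≤ α * P + M := by
    intro ρ hρ p hp
    have h1 : ‖((α * ρ, 0) : ℝ × ℝ)‖ ≤ α * P := by
      rw [Prod.norm_def]
      simp only [norm_zero, Real.norm_eq_abs]
      rw [max_eq_left (abs_nonneg _), abs_mul, abs_of_pos hα]
      exact mul_le_mul_of_nonneg_left hρ hα.le
    calc ‖F ρ p‖ ≤ ‖((α * ρ, 0) : ℝ × ℝ)‖ + ‖G p‖ := norm_add_le _ _
      _ ≤ α * P + M := add_le_add h1 (hM p hp)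
  -- Picard–Lindelöf hypotheses
  have hPL : ∀ ρ ∈ Icc (-P) P,
      OldPL (fun _ => F ρ) (-T) 0 (2 * T) x₀ K R (α * P + M) := by
    intro ρ hρ
    refine ⟨⟨by linarith, by linarith⟩, hR0, fun t _ => hFlip ρ,
      fun p _ => continuousOn_const, fun t _ p hp => hFnorm ρ (abs_le.mpr hρ) p hp, ?_⟩
    have hmax : max (2 * T - 0) (0 - -T) = 2 * T := by
      rw [max_eq_left]; · ring_nf
      · linarith
    rw [hmax]
    have hexp : (α * P + M) * (2 * T) = 2 * (α * P * T) + 2 * (M * T) := by ring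
    rw [hexp, hαPT, hRdef]
    linarith
  -- solvability predicate
  set SP : ℝ → Prop := fun ρ => ∃ x : ℝ → ℝ × ℝ, x 0 = x₀ ∧
      (∀ t ∈ Icc (-T) (2 * T), x t ∈ B) ∧
      ∀ t ∈ Icc (-T) (2 * T), HasDerivWithinAt x (F ρ (x t)) (Icc (-T) (2 * T)) t
    with hSPdef
  have hSP : ∀ ρ ∈ Icc (-P) P, SP ρ := fun ρ hρ => pl_ball x₀ (hPL ρ hρ)
  have hsub : Icc (0 : ℝ) T ⊆ Icc (-T) (2 * T) :=
    Icc_subset_Icc (by linarith) (by linarith)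
  have hnhds : ∀ t ∈ Icc (0 : ℝ) T, Icc (-T) (2 * T) ∈ 𝓝 t := fun t ht =>
    Icc_mem_nhds (by linarith [ht.1]) (by linarith [ht.2])
  -- any solution has two-sided derivatives on [0, T]
  have hDA : ∀ ρ (x : ℝ → ℝ × ℝ), (x 0 = x₀ ∧
      (∀ t ∈ Icc (-T) (2 * T), x t ∈ B) ∧
      ∀ t ∈ Icc (-T) (2 * T), HasDerivWithinAt x (F ρ (x t)) (Icc (-T) (2 * T)) t) →
      ∀ t ∈ Icc (0 : ℝ) T, HasDerivAt x (F ρ (x t)) t := fun ρ x hx t ht =>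
    (hx.2.2 t (hsub ht)).hasDerivAt (hnhds t ht)
  -- component derivatives
  have hDU : ∀ ρ (x : ℝ → ℝ × ℝ), (x 0 = x₀ ∧
      (∀ t ∈ Icc (-T) (2 * T), x t ∈ B) ∧
      ∀ t ∈ Icc (-T) (2 * T), HasDerivWithinAt x (F ρ (x t)) (Icc (-T) (2 * T)) t) →
      ∀ t ∈ Icc (0 : ℝ) T,
        HasDerivAt (fun s => (x s).1) (α * ρ + g (x t).1 (x t).2) t := by
    intro ρ x hx t ht
    have := (ContinuousLinearMap.fst ℝ ℝ ℝ).hasFDerivAt.comp_hasDerivAt t (hDA ρ x hx t ht)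
    simpa [F, G, Function.comp_def] using this
  have hDZ : ∀ ρ (x : ℝ → ℝ × ℝ), (x 0 = x₀ ∧
      (∀ t ∈ Icc (-T) (2 * T), x t ∈ B) ∧
      ∀ t ∈ Icc (-T) (2 * T), HasDerivWithinAt x (F ρ (x t)) (Icc (-T) (2 * T)) t) →
      ∀ t ∈ Icc (0 : ℝ) T,
        HasDerivAt (fun s => (x s).2) (h (x t).1 (x t).2) t := by
    intro ρ x hx t ht
    have := (ContinuousLinearMap.snd ℝ ℝ ℝ).hasFDerivAt.comp_hasDerivAt t (hDA ρ x hx t ht)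
    simpa [F, G, Function.comp_def] using this
  -- displacement estimates
  have hub : ∀ ρ (x : ℝ → ℝ × ℝ), (x 0 = x₀ ∧
      (∀ t ∈ Icc (-T) (2 * T), x t ∈ B) ∧
      ∀ t ∈ Icc (-T) (2 * T), HasDerivWithinAt x (F ρ (x t)) (Icc (-T) (2 * T)) t) →
      |(x T).1 - u₀ - α * ρ * T| ≤ M * T := by
    intro ρ x hx
    have hder : ∀ t ∈ Icc (0 : ℝ) T,
        HasDerivWithinAt (fun s => (x s).1 - α * ρ * s) ((G (x t)).1) (Icc 0 T) t := by
      intro t ht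
      have hmul : HasDerivAt (fun s : ℝ => α * ρ * s) (α * ρ) t := by
        simpa using (hasDerivAt_id t).const_mul (α * ρ)
      have h2 := (hDU ρ x hx t ht).sub hmul
      have h3 : α * ρ + g (x t).1 (x t).2 - α * ρ = (G (x t)).1 := by
        show α * ρ + g (x t).1 (x t).2 - α * ρ = g (x t).1 (x t).2
        ring
      rw [h3] at h2
      exact h2.hasDerivWithinAt
    have hbound : ∀ t ∈ Icc (0 : ℝ) T, ‖(G (x t)).1‖ ≤ M := fun t ht =>
      (norm_fst_le _).trans (hM _ (hx.2.1 t (hsub ht)))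
    have hmvt := Convex.norm_image_sub_le_of_norm_hasDerivWithin_le hder hbound
      (convex_Icc 0 T) (⟨le_rfl, hT0.le⟩ : (0:ℝ) ∈ Icc (0:ℝ) T) (⟨hT0.le, le_rfl⟩ : T ∈ Icc (0:ℝ) T)
    have h0 : (x 0).1 = u₀ := by rw [hx.1]
    rw [Real.norm_eq_abs, Real.norm_eq_abs, h0] at hmvt
    have heq : (x T).1 - α * ρ * T - (u₀ - α * ρ * 0) = (x T).1 - u₀ - α * ρ * T := by ring
    rw [heq] at hmvt
    calc |(x T).1 - u₀ - α * ρ * T| ≤ M * |T - 0| := hmvt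
      _ = M * T := by rw [sub_zero, abs_of_nonneg hT0.le]
  have hzb : ∀ ρ (x : ℝ → ℝ × ℝ), (x 0 = x₀ ∧
      (∀ t ∈ Icc (-T) (2 * T), x t ∈ B) ∧
      ∀ t ∈ Icc (-T) (2 * T), HasDerivWithinAt x (F ρ (x t)) (Icc (-T) (2 * T)) t) →
      |(x T).2 - z₀| ≤ M * T := by
    intro ρ x hx
    have hder : ∀ t ∈ Icc (0 : ℝ) T,
        HasDerivWithinAt (fun s => (x s).2) ((G (x t)).2) (Icc 0 T) t := fun t ht =>
      (hDZ ρ x hx t ht).hasDerivWithinAt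
    have hbound : ∀ t ∈ Icc (0 : ℝ) T, ‖(G (x t)).2‖ ≤ M := fun t ht =>
      (norm_snd_le _).trans (hM _ (hx.2.1 t (hsub ht)))
    have hmvt := Convex.norm_image_sub_le_of_norm_hasDerivWithin_le hder hbound
      (convex_Icc 0 T) (⟨le_rfl, hT0.le⟩ : (0:ℝ) ∈ Icc (0:ℝ) T) (⟨hT0.le, le_rfl⟩ : T ∈ Icc (0:ℝ) T)
    have h0 : (x 0).2 = z₀ := by rw [hx.1]
    rw [Real.norm_eq_abs, Real.norm_eq_abs, h0] at hmvt
    calc |(x T).2 - z₀| ≤ M * |T - 0| := hmvt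
      _ = M * T := by rw [sub_zero, abs_of_nonneg hT0.le]
  -- the value map
  set fρ : ℝ → ℝ := fun ρ => if hρ : SP ρ then ((Classical.choose hρ) T).1 else 0 with hfρdef
  have hfval : ∀ ρ (hρ : SP ρ), fρ ρ = ((Classical.choose hρ) T).1 := fun ρ hρ => dif_pos hρ
  have hPmem : P ∈ Icc (-P) P := ⟨by linarith, le_rfl⟩
  have hmPmem : -P ∈ Icc (-P) P := ⟨le_rfl, by linarith⟩
  have hfP : u₁ ≤ fρ P := by
    have hρ := hSP P hPmem
    have hx := Classical.choose_spec hρ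
    have h1 := hub P (Classical.choose hρ) hx
    rw [hfval P hρ]
    have h2 := abs_le.mp h1
    have h3 : u₁ - u₀ ≤ d := le_abs_self _
    linarith [h2.1, hαPT, hMT1]
  have hfmP : fρ (-P) ≤ u₁ := by
    have hρ := hSP (-P) hmPmem
    have hx := Classical.choose_spec hρ
    have h1 := hub (-P) (Classical.choose hρ) hx
    rw [hfval (-P) hρ]
    have h2 := abs_le.mp h1
    have h3 : -(u₁ - u₀) ≤ d := neg_le_abs _
    have h4 : α * -P * T = -(d + 1 / 2) := by linear_combination -hαPT
    linarith [h2.2, hMT1]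
  -- Lipschitz continuity of the value map in ρ
  set Lc : ℝ := α * Real.exp ((K : ℝ) * T) with hLcdef
  have hLc0 : 0 ≤ Lc := by positivity
  have hflip : ∀ ρ₁ ∈ Icc (-P) P, ∀ ρ₂ ∈ Icc (-P) P,
      dist (fρ ρ₁) (fρ ρ₂) ≤ Lc * dist ρ₁ ρ₂ := by
    intro ρ₁ hρ₁ ρ₂ hρ₂
    have h₁ : SP ρ₁ := hSP ρ₁ hρ₁
    have h₂ : SP ρ₂ := hSP ρ₂ hρ₂
    have hx₁ := Classical.choose_spec h₁
    have hx₂ := Classical.choose_spec h₂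
    set x₁ := Classical.choose h₁ with hx₁def
    set x₂ := Classical.choose h₂ with hx₂def
    have key := dist_le_of_approx_trajectories_ODE_of_mem
      (v := fun _ p => F ρ₁ p) (s := fun _ => B) (K := K)
      (f := x₁) (f' := fun t => F ρ₁ (x₁ t)) (g := x₂) (g' := fun t => F ρ₂ (x₂ t))
      (εf := 0) (εg := α * dist ρ₁ ρ₂) (δ := 0) (a := 0) (b := T)
      (fun _ _ => hFlip ρ₁)
      (fun t ht => (hDA ρ₁ x₁ hx₁ t ht).continuousAt.continuousWithinAt)
      (fun t ht => (hDA ρ₁ x₁ hx₁ t (Ico_subset_Icc_self ht)).hasDerivWithinAt)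
      (fun t _ => by simp)
      (fun t ht => hx₁.2.1 t (hsub (Ico_subset_Icc_self ht)))
      (fun t ht => (hDA ρ₂ x₂ hx₂ t ht).continuousAt.continuousWithinAt)
      (fun t ht => (hDA ρ₂ x₂ hx₂ t (Ico_subset_Icc_self ht)).hasDerivWithinAt)
      (fun t _ => by
        have : dist (F ρ₂ (x₂ t)) (F ρ₁ (x₂ t)) = α * dist ρ₂ ρ₁ := by
          show dist (((α * ρ₂, 0) : ℝ × ℝ) + G (x₂ t)) (((α * ρ₁, 0) : ℝ × ℝ) + G (x₂ t))
            = α * dist ρ₂ ρ₁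
          rw [dist_add_right, dist_prod_same_right, Real.dist_eq, Real.dist_eq,
            ← mul_sub, abs_mul, abs_of_pos hα]
        rw [this, dist_comm ρ₂ ρ₁])
      (fun t ht => hx₂.2.1 t (hsub (Ico_subset_Icc_self ht)))
      (by rw [hx₁.1, hx₂.1, dist_self])
      T ⟨hT0.le, le_rfl⟩
    have hgb : gronwallBound 0 (K : ℝ) (0 + α * dist ρ₁ ρ₂) (T - 0) ≤ Lc * dist ρ₁ ρ₂ := by
      simp only [gronwallBound_of_K_ne_0 (ne_of_gt hK0), zero_add, sub_zero, zero_mul]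
      have hd' : (0:ℝ) ≤ dist ρ₁ ρ₂ := dist_nonneg
      have hexp1 : (0:ℝ) < Real.exp ((K : ℝ) * T) := Real.exp_pos _
      rw [div_mul_eq_mul_div, div_le_iff₀ hK0, hLcdef]
      have hAD : (0:ℝ) ≤ α * dist ρ₁ ρ₂ := mul_nonneg hα.le hd'
      have h1 : α * dist ρ₁ ρ₂ * (Real.exp ((K : ℝ) * T) - 1)
          ≤ α * dist ρ₁ ρ₂ * Real.exp ((K : ℝ) * T) :=
        mul_le_mul_of_nonneg_left (by linarith) hAD
      have h2 : (0:ℝ) ≤ α * dist ρ₁ ρ₂ * Real.exp ((K : ℝ) * T) :=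
        mul_nonneg hAD hexp1.le
      have h3 : α * dist ρ₁ ρ₂ * Real.exp ((K : ℝ) * T) * 1
          ≤ α * dist ρ₁ ρ₂ * Real.exp ((K : ℝ) * T) * (K : ℝ) :=
        mul_le_mul_of_nonneg_left hK1 h2
      linarith [h1, h3]
    rw [hfval ρ₁ h₁, hfval ρ₂ h₂]
    calc dist (x₁ T).1 (x₂ T).1 ≤ dist (x₁ T) (x₂ T) := by
          rw [Prod.dist_eq]; exact le_max_left _ _
      _ ≤ gronwallBound 0 (K : ℝ) (0 + α * dist ρ₁ ρ₂) (T - 0) := key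
      _ ≤ Lc * dist ρ₁ ρ₂ := hgb
  have hcont : ContinuousOn fρ (Icc (-P) P) := by
    refine LipschitzOnWith.continuousOn (K := Lc.toNNReal) ?_
    refine LipschitzOnWith.of_dist_le_mul fun ρ₁ h1 ρ₂ h2 => ?_
    rw [Real.coe_toNNReal _ hLc0]
    exact hflip ρ₁ h1 ρ₂ h2
  -- intermediate value theorem
  have hu₁mem : u₁ ∈ Icc (fρ (-P)) (fρ P) := ⟨hfmP, hfP⟩
  obtain ⟨ρ, hρmem, hρeq⟩ := intermediate_value_Icc (by linarith : -P ≤ P) hcont hu₁mem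
  have hsp : SP ρ := hSP ρ hρmem
  have hx := Classical.choose_spec hsp
  refine ⟨ρ, T, hT0, fun t => ((Classical.choose hsp) t).1,
    fun t => ((Classical.choose hsp) t).2, ?_, ?_, ?_, ?_, ?_, ?_⟩
  · show ((Classical.choose hsp) 0).1 = u₀
    rw [hx.1]
  · show ((Classical.choose hsp) 0).2 = z₀
    rw [hx.1]
  · exact fun t ht => hDU ρ (Classical.choose hsp) hx t ht
  · exact fun t ht => hDZ ρ (Classical.choose hsp) hx t ht
  · show ((Classical.choose hsp) T).1 = u₁
    rw [← hfval ρ hsp]; exact hρeq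
  · have h1 := hzb ρ (Classical.choose hsp) hx
    show |((Classical.choose hsp) T).2 - z₀| < ε
    calc |((Classical.choose hsp) T).2 - z₀| ≤ M * T := h1
      _ ≤ ε / 2 := hMTε
      _ < ε := by linarith
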